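/- arXiv:2508.06172 — 2 statements merged into one kernel-verified Lean document; each statement's English description precedes it below -/
import Mathlib

section
/- Let C be a finite set of task points, let w > 0 be the service time, let c : C × C → ℝ be nonnegative travel times, and let b, t, s : C → ℝ satisfy t(i) ≥ 0 and s(i) = b(i) + t(i) for all i ∈ C. Let A ⊆ C × C be a set of arcs such that b(j) ≥ s(i) + w + c(i,j) for every (i,j) ∈ A. Then A contains no directed cycle on C: there is no finite sequence i_1, i_2, …, i_m of task points (m ≥ 1) with (i_t, i_{t+1}) ∈ A for 1 ≤ t < m and (i_m, i_1) ∈ A. -/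
/-- Under the time-flow constraints (with service time `w > 0`,
nonnegative travel times `c`, waiting times `t ≥ 0`, start times `s = b + t`, and
`b j ≥ s i + w + c i j` for every arc `(i,j) ∈ A`), the arc set `A` contains no
directed cycle of task points. -/
theorem stmt2 {C : Type*} [Fintype C]
    (w : ℝ) (hw : 0 < w)
    (c : C → C → ℝ) (hc : ∀ i j, 0 ≤ c i j)
    (b t s : C → ℝ)
    (ht : ∀ i, 0 ≤ t i)
    (hs : ∀ i, s i = b i + t i)
    (A : Set (C × C))
    (hA : ∀ a ∈ A, b a.2 ≥ s a.1 + w + c a.1 a.2) :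
    ¬ ∃ (m : ℕ) (p : ℕ → C), 1 ≤ m ∧
        (∀ r, r + 1 < m → (p r, p (r + 1)) ∈ A) ∧
        (p (m - 1), p 0) ∈ A := by
  rintro ⟨m, p, hm, harc, hlast⟩
  have step : ∀ i j : C, (i, j) ∈ A → b i < b j := by
    intro i j h
    have := hA (i, j) h
    have h1 := ht i
    have h2 := hc i j
    have h3 := hs i
    simp only at this
    linarith
  have mono : ∀ r, r < m → b (p 0) ≤ b (p r) := by
    intro r
    induction r with
    | zero => intro _; exact le_refl _
    | succ n ih =>
      intro hr
      have hn : n < m := Nat.lt_of_succ_lt hr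
      have := step _ _ (harc n hr)
      linarith [ih hn]
  have h1 : b (p 0) ≤ b (p (m - 1)) := mono _ (Nat.sub_lt hm one_pos)
  have h2 := step _ _ hlast
  linarith
end

section
/- Let T be a finite set of tasks partitioned into finitely many routes, each route being a finite sequence ordering its tasks; let w ≥ 0 be the service time, let d assign a nonnegative travel time to each pair of consecutive tasks on a route, and let g assign a nonnegative required start-time separation g(i,j) = g(j,i) ≥ 0 to every pair of tasks i, j lying on different routes. Then there exists an assignment of start times s : T → ℝ such that (a) for every pair of consecutive tasks p, q on the same route, s(q) ≥ s(p) + w + d(p,q), and (b) for every pair of tasks i, j on different routes, |s(i) − s(j)| ≥ g(i,j). In other words, any task assignment and routing scheme can be extended to a feasible schedule by inserting waiting times. -/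
private lemma stmt4_nat_abs_ge_one {a b : ℕ} (h : a ≠ b) : (1:ℝ) ≤ |(a:ℝ) - (b:ℝ)| := by
  have h1 : 1 ≤ |(a:ℤ) - (b:ℤ)| := Int.one_le_abs (by omega)
  have h2 : ((1:ℤ):ℝ) ≤ ((|(a:ℤ) - (b:ℤ)| : ℤ) : ℝ) := Int.cast_le.mpr h1
  push_cast at h2
  exact h2

/-- Given a finite set of tasks partitioned into finitely many routes
(each route a duplicate-free list ordering its tasks), a service time `w ≥ 0`,
nonnegative travel times `d`, and a nonnegative symmetric required separation `g`
between tasks on different routes, there exists an assignment of start times `s`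
such that (a) consecutive tasks on the same route are separated by at least
`w + d p q`, and (b) tasks on different routes satisfy `|s i - s j| ≥ g i j`. -/
theorem stmt4 {T ρ : Type*} [Fintype T] [Fintype ρ]
    (route : ρ → List T)
    (hpart : ∀ i : T, ∃! r : ρ, i ∈ route r)
    (hnodup : ∀ r : ρ, (route r).Nodup)
    (w : ℝ) (hw : 0 ≤ w)
    (d : T → T → ℝ) (hd : ∀ i j, 0 ≤ d i j)
    (g : T → T → ℝ) (hg0 : ∀ i j, 0 ≤ g i j)
    (hgsymm : ∀ i j, g i j = g j i) :
    ∃ s : T → ℝ,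
      (∀ r : ρ, ∀ n : ℕ, ∀ pq : T × T,
        (route r)[n]? = some pq.1 → (route r)[n + 1]? = some pq.2 →
        s pq.2 ≥ s pq.1 + w + d pq.1 pq.2) ∧
      (∀ i j : T, ∀ r r' : ρ, r ≠ r' → i ∈ route r → j ∈ route r' →
        |s i - s j| ≥ g i j) := by
  classical
  rcases isEmpty_or_nonempty T with hT | hT
  · refine ⟨fun _ => 0, ?_, ?_⟩
    · intro r n pq _ _; exact (hT.false pq.1).elim
    · intro i j _ _ _ _ _; exact (hT.false i).elim
  · obtain ⟨i0⟩ := hT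
    have hne : (Finset.univ : Finset (T × T)).Nonempty := ⟨(i0, i0), Finset.mem_univ _⟩
    set M : ℝ := Finset.univ.sup' hne (fun p : T × T => w + d p.1 p.2) with hMdef
    set G : ℝ := Finset.univ.sup' hne (fun p : T × T => g p.1 p.2) with hGdef
    have hM : ∀ p q : T, w + d p q ≤ M := fun p q =>
      Finset.le_sup' (f := fun p : T × T => w + d p.1 p.2) (Finset.mem_univ (p, q))
    have hG : ∀ p q : T, g p q ≤ G := fun p q =>
      Finset.le_sup' (f := fun p : T × T => g p.1 p.2) (Finset.mem_univ (p, q))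
    have hM0 : 0 ≤ M := le_trans (by linarith [hd i0 i0]) (hM i0 i0)
    have hG0 : 0 ≤ G := le_trans (hg0 i0 i0) (hG i0 i0)
    set L : ℕ := Finset.univ.sup (fun r : ρ => (route r).length) with hLdef
    have hL : ∀ r : ρ, (route r).length ≤ L := fun r =>
      Finset.le_sup (f := fun r : ρ => (route r).length) (Finset.mem_univ r)
    set B : ℝ := G + ((L : ℝ) + 1) * M with hBdef
    have hB0 : 0 ≤ B := by positivity
    -- the route containing each task
    set R : T → ρ := fun i => (hpart i).choose with hRdef
    have hRmem : ∀ i, i ∈ route (R i) := fun i => (hpart i).choose_spec.1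
    have hRuniq : ∀ i r, i ∈ route r → r = R i := fun i r h =>
      (hpart i).choose_spec.2 r h
    have hρ : Nonempty ρ := ⟨R i0⟩
    set k : T → ℕ := fun i => ((Fintype.equivFin ρ) (R i) : ℕ) with hkdef
    set pos : T → ℕ := fun i => (route (R i)).idxOf i with hposdef
    refine ⟨fun i => (k i : ℝ) * B + (pos i : ℝ) * M, ?_, ?_⟩
    · rintro r n ⟨p, q⟩ h1 h2
      simp only at *
      obtain ⟨hn1, hp⟩ := List.getElem?_eq_some_iff.mp h1
      obtain ⟨hn2, hq⟩ := List.getElem?_eq_some_iff.mp h2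
      have hpm : p ∈ route r := hp ▸ List.getElem_mem hn1
      have hqm : q ∈ route r := hq ▸ List.getElem_mem hn2
      have hRp : r = R p := hRuniq p r hpm
      have hRq : r = R q := hRuniq q r hqm
      have hip : pos p = n := by
        have hlt : (route r).idxOf p < (route r).length :=
          List.idxOf_lt_length_iff.2 hpm
        have : (route r)[(route r).idxOf p] = (route r)[n] :=
          (List.getElem_idxOf hlt).trans hp.symm
        have := ((hnodup r).getElem_inj_iff).mp this
        show (route (R p)).idxOf p = n
        rw [← hRp]; exact this
      have hiq : pos q = n + 1 := by
        have hlt : (route r).idxOf q < (route r).length :=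
          List.idxOf_lt_length_iff.2 hqm
        have : (route r)[(route r).idxOf q] = (route r)[n+1] :=
          (List.getElem_idxOf hlt).trans hq.symm
        have := ((hnodup r).getElem_inj_iff).mp this
        show (route (R q)).idxOf q = n + 1
        rw [← hRq]; exact this
      have hk : k p = k q := by show ((Fintype.equivFin ρ) (R p) : ℕ) = ((Fintype.equivFin ρ) (R q) : ℕ); rw [← hRp, ← hRq]
      have hMpq := hM p q
      rw [hip, hiq, hk]
      push_cast
      ring_nf
      nlinarith [hMpq]
    · intro i j r r' hrr' hi hj
      have hRi : r = R i := hRuniq i r hi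
      have hRj : r' = R j := hRuniq j r' hj
      have hkne : k i ≠ k j := by
        simp only [hkdef]
        intro h
        exact hrr' (by
          have := (Fintype.equivFin ρ).injective (Fin.val_injective h)
          rw [hRi, hRj]; exact this)
      have habs1 : (1:ℝ) ≤ |(k i : ℝ) - (k j : ℝ)| := stmt4_nat_abs_ge_one hkne
      have hpi : (pos i : ℝ) ≤ L := by
        have : pos i < (route (R i)).length := List.idxOf_lt_length_iff.2 (hRmem i)
        have := lt_of_lt_of_le this (hL (R i))
        exact_mod_cast this.le
      have hpj : (pos j : ℝ) ≤ L := by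
        have : pos j < (route (R j)).length := List.idxOf_lt_length_iff.2 (hRmem j)
        have := lt_of_lt_of_le this (hL (R j))
        exact_mod_cast this.le
      have hpi0 : (0:ℝ) ≤ (pos i : ℝ) := Nat.cast_nonneg _
      have hpj0 : (0:ℝ) ≤ (pos j : ℝ) := Nat.cast_nonneg _
      set A : ℝ := ((k i : ℝ) - (k j : ℝ)) * B with hAdef
      set C : ℝ := ((pos i : ℝ) - (pos j : ℝ)) * M with hCdef
      have hD : (k i : ℝ) * B + (pos i : ℝ) * M - ((k j : ℝ) * B + (pos j : ℝ) * M)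
          = A + C := by ring
      have hAbound : B ≤ |A| := by
        rw [hAdef, abs_mul, abs_of_nonneg hB0]
        nlinarith [habs1, hB0]
      have hCbound : |C| ≤ (L : ℝ) * M := by
        rw [hCdef, abs_mul, abs_of_nonneg hM0]
        have h1 : |(pos i : ℝ) - (pos j : ℝ)| ≤ (L : ℝ) := by
          rw [abs_sub_le_iff]; constructor <;> linarith
        nlinarith [h1, hM0]
      have htri : |A| - |C| ≤ |A + C| := by
        have := abs_add_le (A + C) (-C)
        simp at this
        calc |A| - |C| = |A + C + (-C)| - |C| := by ring_nf
          _ ≤ |A + C| + |(-C)| - |C| := by linarith [abs_add_le (A + C) (-C)]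
          _ = |A + C| := by rw [abs_neg]; ring
      have hgij := hG i j
      have : g i j ≤ |A + C| := by
        have : B - (L:ℝ)*M = G + M := by rw [hBdef]; ring
        linarith
      rw [hD]
      exact this
end
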